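/- Let F and C be finite sets (facilities and clients). Let x' : F → {0,1} and y' : F × C → {0,1} satisfy y'_{ij} ≤ x'_i for all i ∈ F, j ∈ C. Let C_t ⊆ C be a color class with integer requirement k_t such that |{j ∈ C_t : ∑_{i∈F} y'_{ij} ≥ 1}| ≥ k_t. Let H ⊆ C be arbitrary and define k_t(H) = max(0, k_t − |C_t ∩ H|). Then ∑_{i∈F} min( x'_i · k_t(H), ∑_{j ∈ C_t \ H} y'_{ij} ) ≥ k_t(H). -/

import Mathlib

open Finset

/-- Validity of the strengthened LP constraint for Facility Location: an integral
solution `(x', y')` with `y' i j ≤ x' i` connecting at least `k t` clients of the color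
class `Ct` satisfies, for every set `H` of (heavy) clients, the residual constraint
`∑ i, min (x' i * kt(H)) (∑_{j ∈ Ct \ H} y' i j) ≥ kt(H)`, where
`kt(H) = kt - |Ct ∩ H|` (truncated at `0`). -/
theorem stmt10 {F : Type*} [Fintype F] {C : Type*} [Fintype C] [DecidableEq C]
    (x' : F → ℕ) (hx : ∀ i, x' i = 0 ∨ x' i = 1)
    (y' : F → C → ℕ) (hy : ∀ i j, y' i j = 0 ∨ y' i j = 1)
    (hyx : ∀ i j, y' i j ≤ x' i)
    (Ct : Finset C) (kt : ℕ)
    (hfeas : kt ≤ (Ct.filter (fun j => 1 ≤ ∑ i, y' i j)).card)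
    (H : Finset C) :
    kt - (Ct ∩ H).card ≤
      ∑ i, min (x' i * (kt - (Ct ∩ H).card)) (∑ j ∈ Ct \ H, y' i j) := by
  set K := kt - (Ct ∩ H).card with hK
  rcases Nat.eq_zero_or_pos K with h0 | hKpos
  · simp [h0]
  by_cases hex : ∃ i, K ≤ ∑ j ∈ Ct \ H, y' i j
  · obtain ⟨i, hi⟩ := hex
    have hSpos : 1 ≤ ∑ j ∈ Ct \ H, y' i j := le_trans hKpos hi
    -- some j with y' i j ≥ 1, hence x' i = 1
    have hxi : x' i = 1 := by
      obtain ⟨j, _, hj⟩ := Finset.exists_lt_of_sum_lt (f := fun _ : C => 0)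
        (g := fun j => y' i j) (by simp only [Finset.sum_const_zero]; exact hSpos)
      rcases hx i with h | h
      · have := hyx i j
        omega
      · exact h
    have hterm : K ≤ min (x' i * K) (∑ j ∈ Ct \ H, y' i j) := by
      rw [hxi, one_mul]
      exact le_min le_rfl hi
    calc K ≤ min (x' i * K) (∑ j ∈ Ct \ H, y' i j) := hterm
      _ ≤ _ := Finset.single_le_sum (f := fun i => min (x' i * K) (∑ j ∈ Ct \ H, y' i j))
          (fun _ _ => Nat.zero_le _) (Finset.mem_univ i)
  · push_neg at hex
    have heq : ∀ i, min (x' i * K) (∑ j ∈ Ct \ H, y' i j) = ∑ j ∈ Ct \ H, y' i j := by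
      intro i
      rcases hx i with h | h
      · have hz : ∑ j ∈ Ct \ H, y' i j = 0 :=
          Finset.sum_eq_zero fun j _ => Nat.le_zero.mp (h ▸ hyx i j)
        simp [h, hz]
      · rw [h, one_mul]
        exact min_eq_right (le_of_lt (hex i))
    rw [Finset.sum_congr rfl fun i _ => heq i, Finset.sum_comm]
    -- now bound ∑_{j ∈ Ct\H} ∑_i y' i j ≥ K
    have hcount : K ≤ ((Ct \ H).filter (fun j => 1 ≤ ∑ i, y' i j)).card := by
      have hsub : Ct.filter (fun j => 1 ≤ ∑ i, y' i j) ⊆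
          ((Ct \ H).filter (fun j => 1 ≤ ∑ i, y' i j)) ∪ (Ct ∩ H) := by
        intro j hj
        rw [Finset.mem_filter] at hj
        by_cases hjH : j ∈ H
        · exact Finset.mem_union_right _ (Finset.mem_inter.mpr ⟨hj.1, hjH⟩)
        · exact Finset.mem_union_left _
            (Finset.mem_filter.mpr ⟨Finset.mem_sdiff.mpr ⟨hj.1, hjH⟩, hj.2⟩)
      have := le_trans hfeas (le_trans (Finset.card_le_card hsub)
        (Finset.card_union_le _ _))
      omega
    calc K ≤ ((Ct \ H).filter (fun j => 1 ≤ ∑ i, y' i j)).card := hcount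
      _ = ∑ j ∈ (Ct \ H).filter (fun j => 1 ≤ ∑ i, y' i j), 1 := by
          simp
      _ ≤ ∑ j ∈ (Ct \ H).filter (fun j => 1 ≤ ∑ i, y' i j), ∑ i, y' i j :=
          Finset.sum_le_sum fun j hj => (Finset.mem_filter.mp hj).2
      _ ≤ ∑ j ∈ Ct \ H, ∑ i, y' i j :=
          Finset.sum_le_sum_of_subset (Finset.filter_subset _ _)
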